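/- Let F : S¹ × ℝ → S¹ be a fixed-point-free continuous flow on the circle (so S¹ is a single periodic orbit of some period θ > 0). A continuous map h : S¹ → S¹ has degree 1 if and only if there exists a continuous function α : S¹ → ℝ with h(z) = F(z, α(z)) for all z; moreover such α is unique up to adding an integer multiple of θ. -/

import Mathlib

open Set

section AuxCircleFlow

lemma int_mul_subsingleton' {θ : ℝ} (hθ : 0 < θ) {s : Set ℝ} (hs : IsPreconnected s)
    (h : ∀ x ∈ s, ∃ n : ℤ, x = n * θ) : s.Subsingleton := by
  intro x hx y hy
  by_contra hne
  wlog hlt : x < y generalizing x y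
  · exact this hy hx (Ne.symm hne) (lt_of_le_of_ne (not_lt.1 hlt) (Ne.symm hne))
  obtain ⟨n, rfl⟩ := h x hx
  obtain ⟨m, rfl⟩ := h y hy
  have hnm : n < m := by
    have := lt_of_mul_lt_mul_right hlt hθ.le
    exact_mod_cast this
  have hz : (n : ℝ) * θ + θ/2 ∈ s := by
    have := hs.ordConnected.out hx hy
    apply this
    constructor
    · linarith
    · have : (n : ℝ) + 1 ≤ m := by exact_mod_cast hnm
      nlinarith
  obtain ⟨k, hk⟩ := h _ hz
  have : ((k - n : ℤ) : ℝ) * θ = θ / 2 := by push_cast; linarith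
  rcases le_or_gt (k - n) 0 with hle | hlt'
  · have : ((k - n : ℤ) : ℝ) * θ ≤ 0 := mul_nonpos_of_nonpos_of_nonneg (by exact_mod_cast hle) hθ.le
    linarith
  · have h1 : (1 : ℝ) ≤ ((k - n : ℤ) : ℝ) := by exact_mod_cast hlt'
    nlinarith

lemma addCircle_coe_eq_coe' {θ : ℝ} {x y : ℝ} :
    (x : AddCircle θ) = (y : AddCircle θ) ↔ ∃ n : ℤ, x - y = n * θ := by
  rw [← sub_eq_zero, ← AddCircle.coe_sub, AddCircle.coe_eq_zero_iff]
  constructor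
  · rintro ⟨n, hn⟩; exact ⟨n, by rw [← hn, zsmul_eq_mul]⟩
  · rintro ⟨n, hn⟩; exact ⟨n, by rw [hn, zsmul_eq_mul]⟩

lemma mk_half_ne_zero' {θ : ℝ} (hθ : 0 < θ) : ((θ/2 : ℝ) : AddCircle θ) ≠ 0 := by
  intro h
  have h0 : ((θ/2 : ℝ) : AddCircle θ) = ((0 : ℝ) : AddCircle θ) := by
    rw [h, ← QuotientAddGroup.mk_zero]
  obtain ⟨n, hn⟩ := addCircle_coe_eq_coe'.1 h0
  rw [sub_zero] at hn
  rcases le_or_gt n 0 with h' | h'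
  · have : (n:ℝ) * θ ≤ 0 := mul_nonpos_of_nonpos_of_nonneg (by exact_mod_cast h') hθ.le
    linarith
  · have : (1:ℝ) ≤ (n:ℝ) := by exact_mod_cast h'
    nlinarith

lemma mk_half_eq_mk_neg_half {θ : ℝ} : ((θ/2 : ℝ) : AddCircle θ) = ((-(θ/2) : ℝ) : AddCircle θ) :=
  addCircle_coe_eq_coe'.2 ⟨1, by ring⟩

noncomputable def ell (θ : ℝ) [Fact (0 < θ)] : AddCircle θ → ℝ :=
  fun x => (AddCircle.equivIco θ (-(θ/2)) x : ℝ)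

lemma ell_coe (θ : ℝ) [Fact (0 < θ)] (x : AddCircle θ) : ((ell θ x : ℝ) : AddCircle θ) = x :=
  (AddCircle.equivIco θ (-(θ/2))).symm_apply_apply x

lemma ell_mem (θ : ℝ) [Fact (0 < θ)] (x : AddCircle θ) : ell θ x ∈ Ico (-(θ/2)) (-(θ/2) + θ) :=
  (AddCircle.equivIco θ (-(θ/2)) x).2

lemma ell_zero (θ : ℝ) [Fact (0 < θ)] : ell θ 0 = 0 := by
  have hθ : (0:ℝ) < θ := Fact.out
  have h1 : ((ell θ 0 : ℝ) : AddCircle θ) = ((0:ℝ) : AddCircle θ) := by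
    rw [ell_coe]; norm_cast
  obtain ⟨n, hn⟩ := addCircle_coe_eq_coe'.1 h1
  have hm := ell_mem θ 0
  rw [sub_zero] at hn
  have hn0 : n = 0 := by
    rcases lt_trichotomy n 0 with h | h | h
    · have : (n:ℝ) ≤ -1 := by exact_mod_cast (by omega : n ≤ -1)
      have := hm.1; nlinarith
    · exact h
    · have : (1:ℝ) ≤ (n:ℝ) := by exact_mod_cast h
      have := hm.2; nlinarith
  rw [hn, hn0] at *; simpa using hn

lemma ell_continuousAt (θ : ℝ) [Fact (0 < θ)] {x : AddCircle θ}
    (hx : x ≠ ((-(θ/2) : ℝ) : AddCircle θ)) : ContinuousAt (ell θ) x :=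
  continuousAt_subtype_val.comp (AddCircle.continuousAt_equivIco θ (-(θ/2)) hx)

lemma lift_unique {θ : ℝ} (hθ : 0 < θ) {X : Type} [TopologicalSpace X] {s : Set X}
    (hs : IsPreconnected s) {g₁ g₂ : X → ℝ} (h₁ : ContinuousOn g₁ s) (h₂ : ContinuousOn g₂ s)
    (he : ∀ x ∈ s, ((g₁ x : ℝ) : AddCircle θ) = ((g₂ x : ℝ) : AddCircle θ)) :
    ∀ x ∈ s, ∀ y ∈ s, g₂ x - g₁ x = g₂ y - g₁ y := by
  have hd : ContinuousOn (fun x => g₂ x - g₁ x) s := h₂.sub h₁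
  have him : IsPreconnected ((fun x => g₂ x - g₁ x) '' s) := hs.image _ hd
  have hsub : ((fun x => g₂ x - g₁ x) '' s).Subsingleton := by
    apply int_mul_subsingleton' hθ him
    rintro _ ⟨x, hx, rfl⟩
    obtain ⟨n, hn⟩ := addCircle_coe_eq_coe'.1 (he x hx).symm
    exact ⟨n, hn⟩
  intro x hx y hy
  exact hsub (mem_image_of_mem _ hx) (mem_image_of_mem _ hy)

lemma lift_exists_Icc {θ : ℝ} [Fact (0 < θ)] {f : ℝ → AddCircle θ} (hf : Continuous f)
    (a b x₀ : ℝ) (hx₀ : ((x₀ : ℝ) : AddCircle θ) = f a) :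
    ∃ g : ℝ → ℝ, Continuous g ∧ g a = x₀ ∧ ∀ t ∈ Icc a b, ((g t : ℝ) : AddCircle θ) = f t := by
  have hθ : (0:ℝ) < θ := Fact.out
  rcases le_or_gt b a with hba | hab
  · refine ⟨fun _ => x₀, continuous_const, rfl, fun t ht => ?_⟩
    have : t = a := le_antisymm (ht.2.trans hba) ht.1
    rw [this]; exact hx₀
  · -- find δ
    obtain ⟨δ, hδpos, hδp⟩ : ∃ δ > 0, ∀ s ∈ Icc a b, ∀ t ∈ Icc a b, |s - t| < δ →
        f s - f t ≠ ((θ/2 : ℝ) : AddCircle θ) := by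
      set C : Set (ℝ × ℝ) :=
        {p | p.1 ∈ Icc a b ∧ p.2 ∈ Icc a b ∧ f p.1 - f p.2 = ((θ/2 : ℝ) : AddCircle θ)} with hC
      rcases eq_empty_or_nonempty C with hCe | hCne
      · refine ⟨1, one_pos, fun s hs t ht _ hcontra => ?_⟩
        exact eq_empty_iff_forall_notMem.1 hCe (s, t) ⟨hs, ht, hcontra⟩
      · have hCc : IsClosed C := by
          apply IsClosed.inter (isClosed_Icc.preimage continuous_fst)
          apply IsClosed.inter (isClosed_Icc.preimage continuous_snd)
          exact isClosed_singleton.preimage ((hf.comp continuous_fst).sub (hf.comp continuous_snd))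
        have hCcpt : IsCompact C := by
          apply (isCompact_Icc.prod isCompact_Icc : IsCompact (Icc a b ×ˢ Icc a b)).of_isClosed_subset hCc
          rintro ⟨s, t⟩ ⟨hs, ht, _⟩; exact ⟨hs, ht⟩
        obtain ⟨p₀, hp₀, hmin⟩ := hCcpt.exists_isMinOn hCne
          ((continuous_fst.sub continuous_snd).abs.continuousOn)
        refine ⟨|p₀.1 - p₀.2|, ?_, fun s hs t ht hlt hcontra => ?_⟩
        · rcases (abs_nonneg (p₀.1 - p₀.2)).lt_or_eq with h | h
          · exact h
          · exfalso
            have h12 : p₀.1 = p₀.2 := by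
              have := abs_eq_zero.1 h.symm; linarith [sub_eq_zero.1 this]
            have := hp₀.2.2
            rw [h12, sub_self] at this
            exact mk_half_ne_zero' hθ this.symm
        · have : (s, t) ∈ C := ⟨hs, ht, hcontra⟩
          have := hmin this
          simp only at this
          exact absurd (lt_of_lt_of_le hlt this) (lt_irrefl _)
    set s₀ := δ/2 with hs₀
    have hs₀pos : 0 < s₀ := by positivity
    have key : ∀ i : ℕ, ∃ g : ℝ → ℝ, Continuous g ∧ g a = x₀ ∧
        ∀ t ∈ Icc a (min b (a + i * s₀)), ((g t : ℝ) : AddCircle θ) = f t := by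
      intro i
      induction i with
      | zero =>
        refine ⟨fun _ => x₀, continuous_const, rfl, fun t ht => ?_⟩
        have h3 : min b (a + ((0:ℕ):ℝ) * s₀) ≤ a := by
          push_cast
          rw [zero_mul, add_zero]
          exact min_le_right _ _
        have : t = a := le_antisymm (ht.2.trans h3) ht.1
        rw [this]; exact hx₀
      | succ i ih =>
        obtain ⟨g, hg, hga, hglift⟩ := ih
        set c := min b (a + i * s₀) with hc
        set d := min b (a + (i+1 : ℕ) * s₀) with hd
        have hac : a ≤ c := le_min hab.le (by nlinarith [Nat.cast_nonneg (α := ℝ) i])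
        have hcd : c ≤ d := min_le_min le_rfl (by push_cast; nlinarith)
        have hcb : c ≤ b := min_le_left _ _
        have hdb : d ≤ b := min_le_left _ _
        have hdc : d ≤ c + s₀ := by
          rcases le_total (a + i * s₀) b with h | h
          · rw [hc, min_eq_right h, hd]
            refine (min_le_right _ _).trans ?_
            push_cast; linarith
          · rw [hc, min_eq_left h, hd]
            exact (min_le_left _ _).trans (by linarith)
        have hgc : ((g c : ℝ) : AddCircle θ) = f c := hglift c ⟨hac, le_rfl⟩
        set clamp : ℝ → ℝ := fun t => max c (min t d) with hclamp
        have hclampc : Continuous clamp := continuous_const.max (continuous_id.min continuous_const)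
        have hclamp_mem : ∀ t, clamp t ∈ Icc c d := fun t =>
          ⟨le_max_left _ _, max_le (hcd) (min_le_right _ _)⟩
        have hne : ∀ t, f (clamp t) - f c ≠ ((θ/2 : ℝ) : AddCircle θ) := by
          intro t
          refine hδp (clamp t) ⟨hac.trans (hclamp_mem t).1, (hclamp_mem t).2.trans hdb⟩
            c ⟨hac, hcb⟩ ?_
          rw [abs_lt]
          constructor
          · have := (hclamp_mem t).1; linarith
          · have := (hclamp_mem t).2; linarith
        set e : ℝ → ℝ := fun t => g c + ell θ (f (clamp t) - f c) with he
        have hec : Continuous e := by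
          apply continuous_const.add
          rw [continuous_iff_continuousAt]
          intro t
          apply (ell_continuousAt θ _).comp
          · exact ((hf.comp hclampc).sub continuous_const).continuousAt
          · rw [← mk_half_eq_mk_neg_half]; exact hne t
        have heceq : e c = g c := by
          have h1 : clamp c = c := by
            rw [hclamp]; simp only [min_eq_left hcd, max_self]
          rw [he]; simp only [h1, sub_self, ell_zero, add_zero]
        have helift : ∀ t ∈ Icc c d, ((e t : ℝ) : AddCircle θ) = f t := by
          intro t ht
          have h1 : clamp t = t := by
            rw [hclamp]; simp only [min_eq_left ht.2, max_eq_right ht.1]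
          rw [he]
          push_cast [AddCircle.coe_add]
          rw [h1, ell_coe, hgc]
          abel
        refine ⟨fun t => if t ≤ c then g t else e t,
          Continuous.if_le hg hec continuous_id continuous_const (fun x hx => by rw [hx, heceq]),
          ?_, ?_⟩
        · simp only [if_pos hac, hga]
        · intro t ht
          by_cases htc : t ≤ c
          · simp only [if_pos htc]
            exact hglift t ⟨ht.1, htc⟩
          · simp only [if_neg htc]
            exact helift t ⟨(not_le.1 htc).le, ht.2⟩
    obtain ⟨i, hi⟩ : ∃ i : ℕ, b ≤ a + i * s₀ := by
      obtain ⟨i, hi⟩ := exists_nat_ge ((b - a)/s₀)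
      refine ⟨i, ?_⟩
      rw [div_le_iff₀ hs₀pos] at hi
      linarith
    obtain ⟨g, hg, hga, hglift⟩ := key i
    exact ⟨g, hg, hga, fun t ht => hglift t ⟨ht.1, by rw [min_eq_left hi]; exact ht.2⟩⟩

lemma lift_exists {θ : ℝ} [Fact (0 < θ)] {f : ℝ → AddCircle θ} (hf : Continuous f)
    (x₀ : ℝ) (hx₀ : ((x₀ : ℝ) : AddCircle θ) = f 0) :
    ∃ g : ℝ → ℝ, Continuous g ∧ g 0 = x₀ ∧ ∀ t : ℝ, ((g t : ℝ) : AddCircle θ) = f t := by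
  have hθ : (0:ℝ) < θ := Fact.out
  have H : ∀ n : ℕ, ∃ g : ℝ → ℝ, Continuous g ∧ g 0 = x₀ ∧
      ∀ t ∈ Icc (-(n:ℝ)) (n:ℝ), ((g t : ℝ) : AddCircle θ) = f t := by
    intro n
    obtain ⟨g₁, hg₁c, hg₁0, hg₁l⟩ := lift_exists_Icc hf 0 n x₀ hx₀
    obtain ⟨g₂, hg₂c, hg₂0, hg₂l⟩ := lift_exists_Icc (f := fun t => f (-t))
      (hf.comp continuous_neg) 0 n x₀ (by simpa using hx₀)
    refine ⟨fun t => if t ≤ 0 then g₂ (-t) else g₁ t,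
      Continuous.if_le (hg₂c.comp continuous_neg) hg₁c continuous_id continuous_const
        (fun x hx => by rw [hx]; simp [hg₂0, hg₁0]), by simp [hg₂0], ?_⟩
    intro t ht
    by_cases htc : t ≤ 0
    · simp only [if_pos htc]
      have := hg₂l (-t) ⟨neg_nonneg.2 htc, by linarith [ht.1]⟩
      simpa using this
    · simp only [if_neg htc]
      exact hg₁l t ⟨(not_le.1 htc).le, ht.2⟩
  choose g hgc hg0 hgl using H
  have compat : ∀ n m : ℕ, n ≤ m → ∀ t ∈ Icc (-(n:ℝ)) (n:ℝ), g m t = g n t := by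
    intro n m hnm t ht
    have hsub : Icc (-(n:ℝ)) (n:ℝ) ⊆ Icc (-(m:ℝ)) (m:ℝ) := by
      apply Icc_subset_Icc <;> [skip; exact_mod_cast Nat.cast_le.2 hnm] <;>
        simp only [neg_le_neg_iff] <;> exact_mod_cast Nat.cast_le.2 hnm
    have h0mem : (0:ℝ) ∈ Icc (-(n:ℝ)) (n:ℝ) := ⟨by simp, by simp⟩
    have := lift_unique hθ (isPreconnected_Icc (a := -(n:ℝ)) (b := (n:ℝ)))
      ((hgc n).continuousOn) ((hgc m).continuousOn)
      (fun x hx => by rw [hgl n x hx, hgl m x (hsub hx)]) t ht 0 h0mem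
    have h2 : g m 0 - g n 0 = 0 := by rw [hg0, hg0, sub_self]
    have h3 : g m t - g n t = 0 := by rw [this, h2]
    linarith
  set G : ℝ → ℝ := fun t => g ⌈|t|⌉₊ t with hG
  have hGeq : ∀ (m : ℕ) (t : ℝ), |t| ≤ m → G t = g m t := by
    intro m t htm
    have h1 : (⌈|t|⌉₊ : ℕ) ≤ m := Nat.ceil_le.2 htm
    have h2 : t ∈ Icc (-((⌈|t|⌉₊:ℕ):ℝ)) ((⌈|t|⌉₊:ℕ):ℝ) := by
      have h3 := abs_le.1 (Nat.le_ceil |t|)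
      exact ⟨h3.1, h3.2⟩
    exact (compat _ m h1 t h2).symm
  refine ⟨G, ?_, ?_, ?_⟩
  · rw [continuous_iff_continuousAt]
    intro t
    set m : ℕ := ⌈|t|⌉₊ + 1 with hm
    have hopen : IsOpen {s : ℝ | |s| < (m:ℝ)} := isOpen_lt continuous_abs continuous_const
    have htmem : t ∈ {s : ℝ | |s| < (m:ℝ)} := by
      have := Nat.le_ceil |t|
      simp only [mem_setOf_eq, hm]
      push_cast
      linarith
    apply ((hgc m).continuousAt).congr
    apply Filter.eventuallyEq_of_mem (hopen.mem_nhds htmem)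
    intro s hs
    exact (hGeq m s (le_of_lt hs)).symm
  · rw [hG]
    simp only [abs_zero, Nat.ceil_zero]
    exact hg0 0
  · intro t
    rw [hGeq ⌈|t|⌉₊ t (Nat.le_ceil _)]
    apply hgl
    have h3 := abs_le.1 (Nat.le_ceil |t|)
    exact ⟨h3.1, h3.2⟩

lemma compl_singleton_preconnected {θ : ℝ} [Fact (0 < θ)] (x₀ : AddCircle θ) :
    IsPreconnected ({x₀}ᶜ : Set (AddCircle θ)) := by
  have hθ : (0:ℝ) < θ := Fact.out
  obtain ⟨y₀, rfl⟩ : ∃ y : ℝ, (y : AddCircle θ) = x₀ :=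
    ⟨(AddCircle.equivIco θ 0 x₀ : ℝ), (AddCircle.equivIco θ 0).symm_apply_apply x₀⟩
  have hset : ({((y₀ : ℝ) : AddCircle θ)}ᶜ : Set (AddCircle θ)) =
      (fun t : ℝ => (t : AddCircle θ)) '' Ioo y₀ (y₀ + θ) := by
    ext z
    simp only [mem_compl_iff, mem_singleton_iff, mem_image]
    constructor
    · intro hz
      set w := AddCircle.equivIco θ y₀ z with hw
      have hmem : (w : ℝ) ∈ Ico y₀ (y₀ + θ) := w.2
      have hzw : ((w : ℝ) : AddCircle θ) = z := (AddCircle.equivIco θ y₀).symm_apply_apply z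
      refine ⟨w, ⟨lt_of_le_of_ne hmem.1 ?_, hmem.2⟩, hzw⟩
      intro hcontra
      exact hz (by rw [← hzw, ← hcontra])
    · rintro ⟨t, ht, rfl⟩ hcontra
      obtain ⟨n, hn⟩ := addCircle_coe_eq_coe'.1 hcontra
      rcases le_or_gt n 0 with h' | h'
      · have : (n:ℝ) * θ ≤ 0 := mul_nonpos_of_nonpos_of_nonneg (by exact_mod_cast h') hθ.le
        have := ht.1; linarith
      · have : (1:ℝ) ≤ (n:ℝ) := by exact_mod_cast h'
        have := ht.2; nlinarith
  rw [hset]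
  exact isPreconnected_Ioo.image _ (continuous_quotient_mk'.continuousOn)

lemma no_continuous_injective {θ : ℝ} [Fact (0 < θ)] (g : AddCircle θ → ℝ)
    (hg : Continuous g) : ¬ Function.Injective g := by
  have hθ : (0:ℝ) < θ := Fact.out
  intro hinj
  have hne : ((0:ℝ) : AddCircle θ) ≠ ((θ/2 : ℝ) : AddCircle θ) := by
    intro h
    exact mk_half_ne_zero' hθ (by rw [← h, QuotientAddGroup.mk_zero])
  obtain ⟨a, -, hmin⟩ := isCompact_univ.exists_isMinOn (univ_nonempty) hg.continuousOn
  obtain ⟨b, -, hmax⟩ := isCompact_univ.exists_isMaxOn (univ_nonempty) hg.continuousOn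
  have hm : ∀ x, g a ≤ g x := fun x => hmin (mem_univ x)
  have hM : ∀ x, g x ≤ g b := fun x => hmax (mem_univ x)
  have hmM : g a < g b := by
    rcases lt_or_eq_of_le (hm b) with h | h
    · exact h
    · exfalso
      have hall : ∀ x y : AddCircle θ, g x = g y := fun x y =>
        le_antisymm ((hM x).trans (h ▸ hm y)) ((hM y).trans (h ▸ hm x))
      exact hne (hinj (hall _ _))
  set c := (g a + g b)/2 with hc
  have hcmem : c ∈ range g := by
    have hconn := (isPreconnected_range hg).ordConnected
    exact hconn.out (mem_range_self a) (mem_range_self b) ⟨by linarith, by linarith⟩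
  obtain ⟨x₀, hx₀⟩ := hcmem
  have hax₀ : a ≠ x₀ := fun h => by rw [← h, hc] at hx₀; linarith
  have hbx₀ : b ≠ x₀ := fun h => by rw [← h, hc] at hx₀; linarith
  have hs := compl_singleton_preconnected x₀
  have himg := (hs.image g hg.continuousOn).ordConnected
  have hamem : g a ∈ g '' ({x₀}ᶜ : Set (AddCircle θ)) := mem_image_of_mem g hax₀
  have hbmem : g b ∈ g '' ({x₀}ᶜ : Set (AddCircle θ)) := mem_image_of_mem g hbx₀
  have hcs : c ∈ g '' ({x₀}ᶜ : Set (AddCircle θ)) :=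
    himg.out hamem hbmem ⟨by linarith, by linarith⟩
  obtain ⟨x, hx, hgx⟩ := hcs
  exact hx (hinj (hgx.trans hx₀.symm))

lemma addCircle_liftIco_periodic {θ : ℝ} [Fact (0 < θ)] {B : Type*} {u : ℝ → B}
    (hu : Function.Periodic u θ) (x : ℝ) :
    AddCircle.liftIco θ 0 u ((x : ℝ) : AddCircle θ) = u x := by
  set w := AddCircle.equivIco θ 0 ((x : ℝ) : AddCircle θ) with hw
  have hval : AddCircle.liftIco θ 0 u ((x:ℝ) : AddCircle θ) = u w := rfl
  have hmk : ((w : ℝ) : AddCircle θ) = ((x : ℝ) : AddCircle θ) :=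
    (AddCircle.equivIco θ 0).symm_apply_apply _
  obtain ⟨n, hn⟩ := addCircle_coe_eq_coe'.1 hmk
  have hwx : (w:ℝ) = x + n * θ := by linarith
  rw [hval, hwx]
  exact (hu.int_mul n) x

lemma addCircle_deg_one {θ : ℝ} [Fact (0 < θ)] (k : C(AddCircle θ, AddCircle θ))
    (hk : k.Homotopic (ContinuousMap.id _)) :
    ∃ α : AddCircle θ → ℝ, Continuous α ∧ ∀ x, k x = x + ((α x : ℝ) : AddCircle θ) := by
  have hθ : (0:ℝ) < θ := Fact.out
  obtain ⟨H⟩ := hk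
  set P : unitInterval → ℤ → Prop := fun s n =>
    ∃ G : ℝ → ℝ, Continuous G ∧
      (∀ x : ℝ, ((G x : ℝ) : AddCircle θ) = H (s, ((x:ℝ) : AddCircle θ))) ∧
      ∀ x : ℝ, G (x + θ) = G x + n * θ with hP
  have hex : ∀ s, ∃ n, P s n := by
    intro s
    have hfc : Continuous (fun x : ℝ => H (s, ((x:ℝ) : AddCircle θ))) :=
      H.continuous.comp (continuous_const.prodMk continuous_quotient_mk')
    obtain ⟨G, hGc, hG0, hGl⟩ := lift_exists hfc (ell θ (H (s, (((0:ℝ)) : AddCircle θ))))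
      (ell_coe _ _)
    have huniq := lift_unique hθ isPreconnected_univ hGc.continuousOn
      ((hGc.comp (continuous_add_right θ)).continuousOn)
      (fun x _ => by
        show ((G x : ℝ) : AddCircle θ) = ((G (x + θ) : ℝ) : AddCircle θ)
        rw [hGl x, hGl (x + θ), AddCircle.coe_add_period])
    have hθ0 : ((G (0 + θ) : ℝ) : AddCircle θ) = ((G 0 : ℝ) : AddCircle θ) := by
      rw [hGl (0 + θ), hGl 0, AddCircle.coe_add_period]
    obtain ⟨n, hn⟩ := addCircle_coe_eq_coe'.1 hθ0
    refine ⟨n, G, hGc, hGl, fun x => ?_⟩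
    have := huniq x (mem_univ x) 0 (mem_univ 0)
    simp only [Function.comp_apply, Function.comp] at this
    linarith
  have hPuniq : ∀ s n n', P s n → P s n' → n = n' := by
    rintro s n n' ⟨G, hGc, hGl, hGi⟩ ⟨G', hG'c, hG'l, hG'i⟩
    have huniq := lift_unique hθ isPreconnected_univ hGc.continuousOn hG'c.continuousOn
      (fun x _ => by rw [hGl x, hG'l x])
    have h1 := huniq (0 + θ) (mem_univ _) 0 (mem_univ 0)
    have h2 := hGi 0
    have h3 := hG'i 0
    have : (n:ℝ) * θ = (n':ℝ) * θ := by linarith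
    have : (n:ℝ) = (n':ℝ) := mul_right_cancel₀ hθ.ne' this
    exact_mod_cast this
  have htrans : ∀ (s₀ s : unitInterval) (n : ℤ),
      (∀ x : AddCircle θ, H (s, x) - H (s₀, x) ≠ ((θ/2 : ℝ) : AddCircle θ)) → P s₀ n → P s n := by
    rintro s₀ s n hfar ⟨G, hGc, hGl, hGi⟩
    set u : AddCircle θ → ℝ := fun x => ell θ (H (s, x) - H (s₀, x)) with hu
    have hDc : Continuous (fun x : AddCircle θ => H (s, x) - H (s₀, x)) :=
      (H.continuous.comp (continuous_const.prodMk continuous_id)).sub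
        (H.continuous.comp (continuous_const.prodMk continuous_id))
    have huc : Continuous u := by
      rw [continuous_iff_continuousAt]
      intro x
      exact (ell_continuousAt θ (by rw [← mk_half_eq_mk_neg_half]; exact hfar x)).comp
        hDc.continuousAt
    refine ⟨fun x => G x + u ((x:ℝ) : AddCircle θ), hGc.add (huc.comp continuous_quotient_mk'),
      fun x => ?_, fun x => ?_⟩
    · rw [AddCircle.coe_add, hGl x]
      show H (s₀, _) + ((ell θ _ : ℝ) : AddCircle θ) = _
      rw [ell_coe]
      abel
    · have h5 : (((x + θ : ℝ)) : AddCircle θ) = ((x:ℝ) : AddCircle θ) := AddCircle.coe_add_period θ x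
      show G (x + θ) + u (((x + θ : ℝ)) : AddCircle θ) = G x + u ((x:ℝ) : AddCircle θ) + ↑n * θ
      rw [h5, hGi x]
      ring
  have hloc : ∀ s₀ : unitInterval, ∀ᶠ s in nhds s₀,
      ∀ x : AddCircle θ, H (s, x) - H (s₀, x) ≠ ((θ/2 : ℝ) : AddCircle θ) := by
    intro s₀
    set O : Set (unitInterval × AddCircle θ) :=
      {p | H p - H (s₀, p.2) ≠ ((θ/2 : ℝ) : AddCircle θ)} with hO
    have hOopen : IsOpen O := by
      rw [hO]
      rw [← isClosed_compl_iff]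
      have : Oᶜ = (fun p : unitInterval × AddCircle θ => H p - H (s₀, p.2)) ⁻¹' {((θ/2 : ℝ) : AddCircle θ)} := by
        ext p; simp [hO]
      rw [this]
      exact isClosed_singleton.preimage
        (H.continuous.sub (H.continuous.comp (continuous_const.prodMk continuous_snd)))
    have hsub : ({s₀} ×ˢ (univ : Set (AddCircle θ))) ⊆ O := by
      intro p hp
      have hs : p.1 = s₀ := hp.1
      show H p - H (s₀, p.2) ≠ _
      have h6 : H p = H (s₀, p.2) := by
        conv_lhs => rw [show p = (p.1, p.2) from rfl, hs]
      rw [h6, sub_self]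
      exact fun h => mk_half_ne_zero' hθ h.symm
    obtain ⟨V, W, hVo, hWo, hsV, hUW, hVW⟩ :=
      generalized_tube_lemma isCompact_singleton isCompact_univ hOopen hsub
    apply Filter.eventually_of_mem (hVo.mem_nhds (hsV rfl))
    intro s hs x
    exact hVW (Set.mk_mem_prod hs (hUW (mem_univ x)))
  set N : unitInterval → ℤ := fun s => Classical.choose (hex s) with hN
  have hNspec : ∀ s, P s (N s) := fun s => Classical.choose_spec (hex s)
  have hNloc : ∀ s₀, ∀ᶠ s in nhds s₀, N s = N s₀ := by
    intro s₀
    filter_upwards [hloc s₀] with s hs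
    exact hPuniq s (N s) (N s₀) (hNspec s) (htrans s₀ s (N s₀) hs (hNspec s₀))
  have hNconst : N 0 = N 1 := by
    set S : Set unitInterval := {s | N s = N 1} with hS
    have hSopen : IsOpen S := by
      rw [isOpen_iff_mem_nhds]
      intro s hs
      filter_upwards [hNloc s] with s' hs'
      rw [hS] at hs ⊢
      simp only [mem_setOf_eq] at hs ⊢
      rw [hs', hs]
    have hScopen : IsOpen Sᶜ := by
      rw [isOpen_iff_mem_nhds]
      intro s hs
      filter_upwards [hNloc s] with s' hs'
      simp only [hS, mem_compl_iff, mem_setOf_eq] at hs ⊢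
      rw [hs']
      exact hs
    have : S = univ := IsClopen.eq_univ ⟨isOpen_compl_iff.1 hScopen, hSopen⟩ ⟨1, rfl⟩
    have h0 : (0 : unitInterval) ∈ S := this ▸ mem_univ _
    exact h0
  have hN1 : N 1 = 1 := by
    apply hPuniq 1 (N 1) 1 (hNspec 1)
    refine ⟨fun x => x, continuous_id, fun x => ?_, fun x => by push_cast; ring⟩
    rw [H.apply_one]
    rfl
  have hP0 : P 0 1 := by rw [← hN1, ← hNconst]; exact hNspec 0
  obtain ⟨G, hGc, hGl, hGi⟩ := hP0
  set at' : ℝ → ℝ := fun x => G x - x with hat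
  have hper : Function.Periodic at' θ := by
    intro x
    rw [hat]
    simp only
    rw [hGi x]
    push_cast
    ring
  have hatc : Continuous at' := hGc.sub continuous_id
  set α : AddCircle θ → ℝ := AddCircle.liftIco θ 0 at' with hα
  have hαc : Continuous α :=
    AddCircle.liftIco_continuous (by
      have h7 := hper 0
      rw [zero_add] at h7
      rw [zero_add]
      exact h7.symm) hatc.continuousOn
  have hαeq : ∀ x : ℝ, α ((x:ℝ) : AddCircle θ) = at' x := fun x => addCircle_liftIco_periodic hper x
  refine ⟨α, hαc, fun z => ?_⟩
  obtain ⟨x, rfl⟩ : ∃ x : ℝ, ((x:ℝ) : AddCircle θ) = z :=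
    ⟨(AddCircle.equivIco θ 0 z : ℝ), (AddCircle.equivIco θ 0).symm_apply_apply z⟩
  have h1 : k ((x:ℝ) : AddCircle θ) = H (0, ((x:ℝ) : AddCircle θ)) := (H.apply_zero _).symm
  rw [h1, ← hGl x, hαeq x, hat]
  simp only
  rw [← AddCircle.coe_add]
  congr 1
  ring

end AuxCircleFlow

theorem circle_flow_shift_degree_one (F : Circle × ℝ → Circle) (hFc : Continuous F)
    (hF0 : ∀ z, F (z, 0) = z) (hFadd : ∀ z s t, F (F (z, s), t) = F (z, s + t))
    (θ : ℝ) (hθ : 0 < θ)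
    (hper : ∀ (z : Circle) (t : ℝ), F (z, t) = z ↔ ∃ n : ℤ, t = n * θ)
    (h : C(Circle, Circle)) :
    (ContinuousMap.Homotopic h (ContinuousMap.id Circle) ↔
      ∃ α : Circle → ℝ, Continuous α ∧ ∀ z, h z = F (z, α z)) ∧
    (∀ α α' : Circle → ℝ, Continuous α → Continuous α' →
      (∀ z, h z = F (z, α z)) → (∀ z, h z = F (z, α' z)) →
      ∃ n : ℤ, ∀ z, α' z = α z + n * θ) := by
  haveI : Fact (0 < θ) := ⟨hθ⟩
  have hFθ : ∀ z : Circle, F (z, θ) = z := fun z => (hper z θ).2 ⟨1, by push_cast; ring⟩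
  set Φ : ℝ → Circle := fun t => F (1, t) with hΦ
  have hΦc : Continuous Φ := hFc.comp (continuous_const.prodMk continuous_id)
  have hΦper : Function.Periodic Φ θ := by
    intro t
    show F (1, t + θ) = F (1, t)
    rw [← hFadd 1 t θ, hFθ]
  have hΦmk : ∀ s t : ℝ, Φ s = Φ t → ((s:ℝ) : AddCircle θ) = ((t:ℝ) : AddCircle θ) := by
    intro s t hst
    have h1 : F (Φ s, t - s) = Φ s := by
      show F (F (1, s), t - s) = Φ s
      rw [hFadd]
      rw [show s + (t - s) = t by ring]
      exact hst.symm
    obtain ⟨n, hn⟩ := (hper _ _).1 h1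
    exact addCircle_coe_eq_coe'.2 ⟨-n, by push_cast; linarith⟩
  set W : AddCircle θ → Circle := AddCircle.liftIco θ 0 Φ with hW
  have hWmk : ∀ t : ℝ, W ((t:ℝ) : AddCircle θ) = Φ t := fun t =>
    addCircle_liftIco_periodic hΦper t
  have hWc : Continuous W := by
    apply AddCircle.liftIco_continuous _ hΦc.continuousOn
    have h7 := hΦper 0
    rw [zero_add] at h7
    rw [zero_add]
    exact h7.symm
  have hWinj : Function.Injective W := by
    intro x y hxy
    obtain ⟨s, rfl⟩ : ∃ s : ℝ, ((s:ℝ) : AddCircle θ) = x :=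
      ⟨(AddCircle.equivIco θ 0 x : ℝ), (AddCircle.equivIco θ 0).symm_apply_apply x⟩
    obtain ⟨t, rfl⟩ : ∃ t : ℝ, ((t:ℝ) : AddCircle θ) = y :=
      ⟨(AddCircle.equivIco θ 0 y : ℝ), (AddCircle.equivIco θ 0).symm_apply_apply y⟩
    rw [hWmk s, hWmk t] at hxy
    exact hΦmk s t hxy
  have hWsurj : Function.Surjective W := by
    by_contra hns
    rw [Function.Surjective] at hns
    push_neg at hns
    obtain ⟨w, hw⟩ := hns
    set u : Circle → ℝ := fun z => Complex.arg (-((z * w⁻¹ : Circle) : ℂ)) with hu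
    have hslit : ∀ z : Circle, z ≠ w → -((z * w⁻¹ : Circle) : ℂ) ∈ Complex.slitPlane := by
      intro z hz
      rw [Complex.mem_slitPlane_iff]
      by_contra hcon
      push_neg at hcon
      obtain ⟨hre, him⟩ := hcon
      set v : Circle := z * w⁻¹ with hv
      have him' : (v:ℂ).im = 0 := by
        have := him
        rw [Complex.neg_im] at this
        linarith
      have hveq : (v:ℂ) = ((v:ℂ).re : ℂ) := by
        apply Complex.ext
        · simp
        · simp [him']
      have habs : ‖(v:ℂ)‖ = 1 := Circle.norm_coe v
      have habs' : |(v:ℂ).re| = 1 := by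
        rw [hveq, Complex.norm_real, Real.norm_eq_abs] at habs
        exact habs
      have hre' : 0 ≤ (v:ℂ).re := by
        rw [Complex.neg_re] at hre
        linarith
      have hone : (v:ℂ).re = 1 := by
        rcases abs_cases (v:ℂ).re with h' | h'
        · linarith [h'.1]
        · linarith [h'.1]
      have hv1 : v = 1 := by
        rw [← Circle.coe_eq_one, hveq, hone]
        norm_num
      rw [hv, mul_inv_eq_one] at hv1
      exact hz hv1
    have hcoec : Continuous (fun z : Circle => -((z * w⁻¹ : Circle) : ℂ)) :=
      ((continuous_subtype_val.comp (continuous_id.mul continuous_const))).neg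
    set g : AddCircle θ → ℝ := fun x => u (W x) with hg
    have hgc : Continuous g := by
      rw [continuous_iff_continuousAt]
      intro x
      have h1 : ContinuousAt u (W x) :=
        ContinuousAt.comp (g := Complex.arg) (f := fun z : Circle => -((z * w⁻¹ : Circle) : ℂ))
          (Complex.continuousAt_arg (hslit (W x) (hw x))) hcoec.continuousAt
      exact ContinuousAt.comp h1 hWc.continuousAt
    have habs1 : ∀ z : Circle, ‖-((z * w⁻¹ : Circle) : ℂ)‖ = 1 := by
      intro z
      rw [norm_neg]
      exact Circle.norm_coe _
    have hginj : Function.Injective g := by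
      intro x y hxy
      apply hWinj
      have h2 : -((W x * w⁻¹ : Circle) : ℂ) = -((W y * w⁻¹ : Circle) : ℂ) :=
        Complex.ext_norm_arg ((habs1 _).trans (habs1 _).symm) hxy
      have h3 : ((W x * w⁻¹ : Circle) : ℂ) = ((W y * w⁻¹ : Circle) : ℂ) := neg_inj.1 h2
      have h4 : (W x * w⁻¹ : Circle) = W y * w⁻¹ := Circle.coe_inj.1 h3
      exact mul_right_cancel h4
    exact no_continuous_injective g hgc hginj
  set WH : AddCircle θ ≃ₜ Circle :=
    Continuous.homeoOfEquivCompactToT2 (f := Equiv.ofBijective W ⟨hWinj, hWsurj⟩) hWc with hWH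
  have hWHapp : ∀ x, WH x = W x := fun x => rfl
  have key : ∀ (x : AddCircle θ) (t : ℝ), F (W x, t) = W (x + ((t:ℝ) : AddCircle θ)) := by
    intro x t
    obtain ⟨s, rfl⟩ : ∃ s : ℝ, ((s:ℝ) : AddCircle θ) = x :=
      ⟨(AddCircle.equivIco θ 0 x : ℝ), (AddCircle.equivIco θ 0).symm_apply_apply x⟩
    rw [hWmk s, ← AddCircle.coe_add, hWmk (s + t)]
    show F (F (1, s), t) = F (1, s + t)
    exact hFadd 1 s t
  constructor
  · constructor
    · -- homotopic → exists α
      intro hH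
      set cW : C(AddCircle θ, Circle) := ⟨W, hWc⟩ with hcW
      set cWi : C(Circle, AddCircle θ) := ⟨WH.symm, WH.symm.continuous⟩ with hcWi
      set k : C(AddCircle θ, AddCircle θ) := cWi.comp (h.comp cW) with hk
      have hkid : k.Homotopic (ContinuousMap.id _) := by
        have h1 := ContinuousMap.Homotopic.comp
          hH (ContinuousMap.Homotopic.refl cW)
        have h2 := ContinuousMap.Homotopic.comp
          (ContinuousMap.Homotopic.refl cWi) h1
        have h3 : cWi.comp ((ContinuousMap.id Circle).comp cW) = ContinuousMap.id _ := by
          ext x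
          show WH.symm (W x) = x
          rw [← hWHapp x]
          exact WH.symm_apply_apply x
        rw [← h3]
        exact h2
      obtain ⟨α', hα'c, hα'⟩ := addCircle_deg_one k hkid
      refine ⟨fun z => α' (WH.symm z), hα'c.comp WH.symm.continuous, ?_⟩
      intro z
      have h5 : W (WH.symm z) = z := by
        rw [← hWHapp (WH.symm z)]
        exact WH.apply_symm_apply z
      have h6 : h z = W (k (WH.symm z)) := by
        have : k (WH.symm z) = WH.symm (h (W (WH.symm z))) := rfl
        rw [this, h5, ← hWHapp (WH.symm (h z))]
        exact (WH.apply_symm_apply (h z)).symm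
      rw [h6, hα' (WH.symm z), ← key, h5]
    · -- exists α → homotopic
      rintro ⟨α, hαc, hα⟩
      refine ⟨⟨⟨fun p => F (p.2, (1 - (p.1 : ℝ)) * α p.2), ?_⟩, ?_, ?_⟩⟩
      · apply hFc.comp
        apply Continuous.prodMk continuous_snd
        exact ((continuous_const.sub
          (continuous_subtype_val.comp continuous_fst)).mul (hαc.comp continuous_snd))
      · intro x
        show F (x, (1 - (0:ℝ)) * α x) = h x
        rw [show (1 - (0:ℝ)) * α x = α x by ring]
        exact (hα x).symm
      · intro x
        show F (x, (1 - (1:ℝ)) * α x) = x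
        rw [show (1 - (1:ℝ)) * α x = 0 by ring]
        exact hF0 x
  · -- uniqueness
    intro α α' hαc hα'c hα hα'
    have hpt : ∀ z, ∃ n : ℤ, α' z - α z = n * θ := by
      intro z
      have h1 : F (h z, α' z - α z) = h z := by
        conv_lhs => rw [hα z]
        rw [hFadd]
        rw [show α z + (α' z - α z) = α' z by ring]
        exact (hα' z).symm
      obtain ⟨n, hn⟩ := (hper _ _).1 h1
      exact ⟨n, hn⟩
    set d : Circle → ℝ := fun z => α' z - α z with hd
    have hdc : Continuous d := hα'c.sub hαc
    have hsub : (Set.range (fun x : AddCircle θ => d (W x))).Subsingleton := by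
      apply int_mul_subsingleton' hθ (isPreconnected_range (hdc.comp hWc))
      rintro _ ⟨x, rfl⟩
      exact hpt (W x)
    obtain ⟨n, hn⟩ := hpt 1
    refine ⟨n, fun z => ?_⟩
    obtain ⟨x, hx⟩ := hWsurj z
    obtain ⟨y, hy⟩ := hWsurj 1
    have h8 : d z = d 1 := by
      have h9 : d (W x) = d (W y) :=
        hsub (mem_range_self x) (mem_range_self y)
      rw [hx, hy] at h9
      exact h9
    have : d z = n * θ := h8.trans hn
    rw [hd] at this
    simp only at this
    linarith
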